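/- Let M be a smooth d-dimensional manifold and n ≥ 2. The open sets C_{I₁I₂}, where (I₁, I₂) runs over the nontrivial partitions {1,…,n} = I₁ ⊔ I₂, cover M^n \ d_n, and there exists a partition of unity {χ_{I₁I₂}} subordinated to this cover such that every function χ_{I₁I₂} is tempered along the small diagonal d_n. -/

import Mathlib

open Filter Topology MeasureTheory Metric Set

noncomputable section

/-- `d`-dimensional Euclidean space. -/
abbrev Euc (d : ℕ) := EuclideanSpace ℝ (Fin d)

/-- The configuration space `M^n` of `n` points of `M = ℝ^d`. -/
abbrev Conf (d n : ℕ) := Fin n → Euc d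

variable {d n : ℕ}

/-- A function on a normed space is tempered along a closed set `X`: it is smooth off
`X`, and for every `k ∈ ℕ` and compact `K` there are `C, s > 0` with
`sup_{|ν|≤k}|∂^ν f(x)| ≤ C[1 + dist(x,X)^{−s}]` for all `x ∈ K \ X`. -/
def TemperedAlong {V : Type*} [NormedAddCommGroup V] [NormedSpace ℝ V]
    (X : Set V) (f : V → ℂ) : Prop :=
  ContDiffOn ℝ (⊤ : ℕ∞) f Xᶜ ∧
  ∀ (k : ℕ) (K : Set V), IsCompact K →
    ∃ C s : ℝ, 0 < C ∧ 0 < s ∧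
      ∀ x ∈ K \ X, ∀ j : ℕ, j ≤ k →
        ‖iteratedFDeriv ℝ j f x‖ ≤ C * (1 + Metric.infDist x X ^ (-s))

/-- The small diagonal `d_n = {(x,…,x)} ⊆ M^n`. -/
def smallDiag (d n : ℕ) : Set (Conf d n) := {x : Conf d n | ∀ i j : Fin n, x i = x j}

/-- A pair `(I₁, I₂)` is a nontrivial partition of `{1,…,n}`: both parts nonempty,
disjoint, with union everything. -/
def IsNontrivPart (p : Finset (Fin n) × Finset (Fin n)) : Prop :=
  p.1.Nonempty ∧ p.2.Nonempty ∧ Disjoint p.1 p.2 ∧ p.1 ∪ p.2 = Finset.univ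

/-- The open set `C_{I₁I₂} = {x : x_i ≠ x_j for all (i,j) ∈ I₁ × I₂}`. -/
def Cpart (p : Finset (Fin n) × Finset (Fin n)) : Set (Conf d n) :=
  {x : Conf d n | ∀ i ∈ p.1, ∀ j ∈ p.2, x i ≠ x j}

namespace St15

variable {d n : ℕ}

/-- The squared "diameter" polynomial. -/
def Dfun (x : Conf d n) : ℝ := ∑ i : Fin n, ∑ j : Fin n, ‖x i - x j‖ ^ 2

lemma Dfun_nonneg (x : Conf d n) : 0 ≤ Dfun x := by
  apply Finset.sum_nonneg; intro i _; apply Finset.sum_nonneg; intro j _; positivity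

lemma contDiff_Dfun : ContDiff ℝ (⊤ : ℕ∞) (Dfun (d := d) (n := n)) := by
  apply ContDiff.sum; intro i _; apply ContDiff.sum; intro j _
  exact ContDiff.norm_sq ℝ
    (((ContinuousLinearMap.proj (R := ℝ) (φ := fun _ : Fin n => Euc d) i).contDiff).sub
      ((ContinuousLinearMap.proj (R := ℝ) (φ := fun _ : Fin n => Euc d) j).contDiff))

lemma isClosed_smallDiag : IsClosed (smallDiag d n) := by
  have : smallDiag d n = ⋂ (i : Fin n) (j : Fin n), {x : Conf d n | x i = x j} := by
    ext x; simp [smallDiag, Set.mem_iInter]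
  rw [this]
  exact isClosed_iInter fun i => isClosed_iInter fun j =>
    isClosed_eq (continuous_apply i) (continuous_apply j)

lemma isOpen_compl_smallDiag : IsOpen (smallDiag d n)ᶜ := isClosed_smallDiag.isOpen_compl

lemma uniqueDiffOn_compl : UniqueDiffOn ℝ (smallDiag d n)ᶜ := isOpen_compl_smallDiag.uniqueDiffOn

lemma smallDiag_nonempty : (smallDiag d n).Nonempty := ⟨fun _ => 0, fun _ _ => rfl⟩

lemma not_mem_smallDiag_iff {x : Conf d n} : x ∉ smallDiag d n ↔ ∃ i j : Fin n, x i ≠ x j := by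
  simp [smallDiag]

lemma Dfun_pos {x : Conf d n} (hx : x ∉ smallDiag d n) : 0 < Dfun x := by
  obtain ⟨i, j, hij⟩ := not_mem_smallDiag_iff.1 hx
  have hne : x i - x j ≠ 0 := sub_ne_zero.2 hij
  have h1 : 0 < ‖x i - x j‖ ^ 2 := pow_pos (norm_pos_iff.2 hne) 2
  calc 0 < ‖x i - x j‖ ^ 2 := h1
    _ ≤ ∑ j' : Fin n, ‖x i - x j'‖ ^ 2 := by
        apply Finset.single_le_sum (f := fun j' => ‖x i - x j'‖ ^ 2) (fun j' _ => by positivity)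
          (Finset.mem_univ j)
    _ ≤ Dfun x := by
        apply Finset.single_le_sum (f := fun i' => ∑ j' : Fin n, ‖x i' - x j'‖ ^ 2)
          (fun i' _ => Finset.sum_nonneg fun j' _ => by positivity) (Finset.mem_univ i)

lemma infDist_sq_le_Dfun (hn : 0 < n) (x : Conf d n) :
    infDist x (smallDiag d n) ^ 2 ≤ Dfun x := by
  have i0 : Fin n := ⟨0, hn⟩
  set y : Conf d n := fun _ => x i0 with hy
  have hymem : y ∈ smallDiag d n := fun _ _ => rfl
  have h1 : infDist x (smallDiag d n) ≤ dist x y := infDist_le_dist_of_mem hymem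
  have h2 : dist x y ≤ Real.sqrt (Dfun x) := by
    rw [dist_pi_le_iff (Real.sqrt_nonneg _)]
    intro i
    have : dist (x i) (y i) ^ 2 ≤ Dfun x := by
      have : dist (x i) (y i) ^ 2 = ‖x i - x i0‖ ^ 2 := by rw [hy]; simp [dist_eq_norm]
      rw [this]
      calc ‖x i - x i0‖ ^ 2 ≤ ∑ j' : Fin n, ‖x i - x j'‖ ^ 2 :=
            Finset.single_le_sum (f := fun j' => ‖x i - x j'‖ ^ 2) (fun j' _ => by positivity)
              (Finset.mem_univ i0)
        _ ≤ Dfun x := Finset.single_le_sum (f := fun i' => ∑ j' : Fin n, ‖x i' - x j'‖ ^ 2)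
              (fun i' _ => Finset.sum_nonneg fun j' _ => by positivity) (Finset.mem_univ i)
    calc dist (x i) (y i) ≤ |dist (x i) (y i)| := le_abs_self _
      _ ≤ Real.sqrt (Dfun x) := by
          rw [← Real.sqrt_sq_eq_abs]; exact Real.sqrt_le_sqrt this
  calc infDist x (smallDiag d n) ^ 2 ≤ dist x y ^ 2 := by
        apply pow_le_pow_left₀ infDist_nonneg h1
    _ ≤ Dfun x := by
        have := Real.sq_sqrt (Dfun_nonneg x)
        nlinarith [h2, dist_nonneg (x := x) (y := y), Real.sqrt_nonneg (Dfun x)]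

/-- Tempered-with-polynomial-blowup class along the small diagonal. -/
def Good (f : Conf d n → ℝ) : Prop :=
  ContDiffOn ℝ (⊤ : ℕ∞) f (smallDiag d n)ᶜ ∧
  ∀ (k : ℕ) (K : Set (Conf d n)), IsCompact K → ∃ C : ℝ, 0 < C ∧ ∃ s : ℕ,
    ∀ x ∈ K \ smallDiag d n, ∀ j, j ≤ k →
      ‖iteratedFDerivWithin ℝ j f (smallDiag d n)ᶜ x‖ ≤ C * (1 + (Dfun x)⁻¹) ^ s

lemma one_le_w (x : Conf d n) : (1 : ℝ) ≤ 1 + (Dfun x)⁻¹ := by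
  have := inv_nonneg.2 (Dfun_nonneg x); linarith

lemma w_nonneg (x : Conf d n) : (0 : ℝ) ≤ 1 + (Dfun x)⁻¹ := le_trans zero_le_one (one_le_w x)

lemma le_max_sum {C : ℕ → ℝ} {j k : ℕ} (hj : j ≤ k) :
    C j ≤ 1 + ∑ i ∈ Finset.range (k + 1), max (C i) 0 := by
  have h1 : C j ≤ max (C j) 0 := le_max_left _ _
  have h2 : max (C j) 0 ≤ ∑ i ∈ Finset.range (k + 1), max (C i) 0 :=
    Finset.single_le_sum (f := fun i => max (C i) 0) (fun i _ => le_max_right _ _)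
      (Finset.mem_range.2 (Nat.lt_succ_of_le hj))
  linarith

lemma max_sum_pos (C : ℕ → ℝ) (k : ℕ) :
    0 < 1 + ∑ i ∈ Finset.range (k + 1), max (C i) 0 := by
  have : (0:ℝ) ≤ ∑ i ∈ Finset.range (k + 1), max (C i) 0 :=
    Finset.sum_nonneg fun i _ => le_max_right _ _
  linarith

lemma natle (j : ℕ) : (j : WithTop ℕ∞) ≤ ((⊤ : ℕ∞) : WithTop ℕ∞) := by
  exact_mod_cast (le_top : (j : ℕ∞) ≤ ⊤)

lemma Good.of_contDiff {f : Conf d n → ℝ} (hf : ContDiff ℝ (⊤ : ℕ∞) f) : Good f := by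
  refine ⟨hf.contDiffOn, fun k K hK => ?_⟩
  have h : ∀ j : ℕ, ∃ C, ∀ x ∈ K, ‖iteratedFDeriv ℝ j f x‖ ≤ C := by
    intro j
    exact hK.exists_bound_of_continuousOn
      ((hf.continuous_iteratedFDeriv (natle j)).continuousOn)
  choose C hC using h
  refine ⟨1 + ∑ i ∈ Finset.range (k + 1), max (C i) 0, max_sum_pos C k, 0, ?_⟩
  intro x hx j hj
  rw [iteratedFDerivWithin_of_isOpen j isOpen_compl_smallDiag hx.2]
  simpa using (hC j x hx.1).trans (le_max_sum hj)

lemma Good.const (c : ℝ) : Good (fun _ : Conf d n => c) := Good.of_contDiff contDiff_const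

lemma Good.add {f g : Conf d n → ℝ} (hf : Good f) (hg : Good g) : Good (fun x => f x + g x) := by
  refine ⟨hf.1.add hg.1, fun k K hK => ?_⟩
  obtain ⟨C1, hC1, s1, h1⟩ := hf.2 k K hK
  obtain ⟨C2, hC2, s2, h2⟩ := hg.2 k K hK
  refine ⟨C1 + C2, by linarith, max s1 s2, ?_⟩
  intro x hx j hj
  have hadd := iteratedFDerivWithin_add_apply' (i := j) (hf.1.of_le (natle j) x hx.2)
    (hg.1.of_le (natle j) x hx.2) uniqueDiffOn_compl hx.2
  rw [hadd]
  have e1 := h1 x hx j hj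
  have e2 := h2 x hx j hj
  have w1 : (1:ℝ) ≤ 1 + (Dfun x)⁻¹ := one_le_w x
  have p1 : C1 * (1 + (Dfun x)⁻¹) ^ s1 ≤ C1 * (1 + (Dfun x)⁻¹) ^ max s1 s2 := by
    have := pow_le_pow_right₀ w1 (le_max_left s1 s2)
    nlinarith
  have p2 : C2 * (1 + (Dfun x)⁻¹) ^ s2 ≤ C2 * (1 + (Dfun x)⁻¹) ^ max s1 s2 := by
    have := pow_le_pow_right₀ w1 (le_max_right s1 s2)
    nlinarith
  calc ‖iteratedFDerivWithin ℝ j f _ x + iteratedFDerivWithin ℝ j g _ x‖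
      ≤ ‖iteratedFDerivWithin ℝ j f _ x‖ + ‖iteratedFDerivWithin ℝ j g _ x‖ := norm_add_le _ _
    _ ≤ C1 * (1 + (Dfun x)⁻¹) ^ max s1 s2 + C2 * (1 + (Dfun x)⁻¹) ^ max s1 s2 := by
        linarith
    _ = (C1 + C2) * (1 + (Dfun x)⁻¹) ^ max s1 s2 := by ring

lemma Good.mul {f g : Conf d n → ℝ} (hf : Good f) (hg : Good g) : Good (fun x => f x * g x) := by
  refine ⟨hf.1.mul hg.1, fun k K hK => ?_⟩
  obtain ⟨C1, hC1, s1, h1⟩ := hf.2 k K hK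
  obtain ⟨C2, hC2, s2, h2⟩ := hg.2 k K hK
  refine ⟨2 ^ k * C1 * C2, by positivity, s1 + s2, ?_⟩
  intro x hx j hj
  set w := 1 + (Dfun x)⁻¹ with hw
  have w1 : (1:ℝ) ≤ w := one_le_w x
  have hb := norm_iteratedFDerivWithin_mul_le (𝕜 := ℝ) (hf.1) (hg.1) uniqueDiffOn_compl hx.2
    (natle j)
  refine hb.trans ?_
  have hterm : ∀ i ∈ Finset.range (j + 1),
      (j.choose i : ℝ) * ‖iteratedFDerivWithin ℝ i f (smallDiag d n)ᶜ x‖ *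
        ‖iteratedFDerivWithin ℝ (j - i) g (smallDiag d n)ᶜ x‖ ≤
      (j.choose i : ℝ) * ((C1 * w ^ s1) * (C2 * w ^ s2)) := by
    intro i hi
    have hi' : i ≤ k := le_trans (Nat.lt_succ_iff.1 (Finset.mem_range.1 hi)) hj
    have hji : j - i ≤ k := le_trans (Nat.sub_le _ _) hj
    have e1 := h1 x hx i hi'
    have e2 := h2 x hx (j - i) hji
    have n1 : (0:ℝ) ≤ ‖iteratedFDerivWithin ℝ i f (smallDiag d n)ᶜ x‖ := norm_nonneg _
    have n2 : (0:ℝ) ≤ ‖iteratedFDerivWithin ℝ (j-i) g (smallDiag d n)ᶜ x‖ := norm_nonneg _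
    have c1 : (0:ℝ) ≤ C1 * w ^ s1 := by positivity
    have : ‖iteratedFDerivWithin ℝ i f (smallDiag d n)ᶜ x‖ *
        ‖iteratedFDerivWithin ℝ (j - i) g (smallDiag d n)ᶜ x‖ ≤
        (C1 * w ^ s1) * (C2 * w ^ s2) := by
      apply mul_le_mul e1 e2 n2 c1
    have hcn : (0:ℝ) ≤ (j.choose i : ℝ) := Nat.cast_nonneg _
    calc (j.choose i : ℝ) * ‖iteratedFDerivWithin ℝ i f (smallDiag d n)ᶜ x‖ *
          ‖iteratedFDerivWithin ℝ (j - i) g (smallDiag d n)ᶜ x‖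
        = (j.choose i : ℝ) * (‖iteratedFDerivWithin ℝ i f (smallDiag d n)ᶜ x‖ *
          ‖iteratedFDerivWithin ℝ (j - i) g (smallDiag d n)ᶜ x‖) := by ring
      _ ≤ (j.choose i : ℝ) * ((C1 * w ^ s1) * (C2 * w ^ s2)) := by
          apply mul_le_mul_of_nonneg_left this hcn
  refine (Finset.sum_le_sum hterm).trans ?_
  rw [← Finset.sum_mul]
  have hchoose : ∑ i ∈ Finset.range (j + 1), (j.choose i : ℝ) = 2 ^ j := by
    rw [← Nat.cast_sum]
    rw [Nat.sum_range_choose]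
    push_cast; ring
  rw [hchoose]
  have h2j : (2:ℝ) ^ j ≤ 2 ^ k := pow_le_pow_right₀ one_le_two hj
  have : (0:ℝ) ≤ (C1 * w ^ s1) * (C2 * w ^ s2) := by positivity
  calc (2:ℝ) ^ j * ((C1 * w ^ s1) * (C2 * w ^ s2))
      ≤ 2 ^ k * ((C1 * w ^ s1) * (C2 * w ^ s2)) := mul_le_mul_of_nonneg_right h2j this
    _ = 2 ^ k * C1 * C2 * w ^ (s1 + s2) := by rw [pow_add]; ring

lemma Good.congr {f g : Conf d n → ℝ} (hf : Good f) (h : ∀ x, g x = f x) : Good g := by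
  have : g = f := funext h
  rw [this]; exact hf

lemma Good.pow {f : Conf d n → ℝ} (hf : Good f) (m : ℕ) : Good (fun x => f x ^ m) := by
  induction m with
  | zero => exact (Good.const 1).congr (fun x => by simp)
  | succ m ih => exact (ih.mul hf).congr (fun x => by rw [pow_succ])

lemma Good.prod {α : Type*} [DecidableEq α] (s : Finset α) (f : α → Conf d n → ℝ)
    (hf : ∀ a ∈ s, Good (f a)) : Good (fun x => ∏ a ∈ s, f a x) := by
  induction s using Finset.induction with
  | empty => exact (Good.const 1).congr (fun x => by simp)
  | @insert a s ha ih =>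
    have h1 : Good (f a) := hf a (Finset.mem_insert_self a s)
    have h2 : Good (fun x => ∏ b ∈ s, f b x) := ih (fun b hb => hf b (Finset.mem_insert_of_mem hb))
    exact (h1.mul h2).congr (fun x => by rw [Finset.prod_insert ha])

lemma iteratedDeriv_inv_eq : ∀ (k : ℕ) {y : ℝ}, y ≠ 0 →
    iteratedDeriv k (Inv.inv : ℝ → ℝ) y = (-1) ^ k * (k.factorial : ℝ) * (y ^ (k + 1))⁻¹ := by
  intro k
  induction k with
  | zero => intro y hy; simp [iteratedDeriv_zero]
  | succ k ih =>
    intro y hy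
    rw [iteratedDeriv_succ]
    have hmem : {(0:ℝ)}ᶜ ∈ 𝓝 y := isOpen_compl_singleton.mem_nhds (by simpa using hy)
    have hev : iteratedDeriv k (Inv.inv : ℝ → ℝ) =ᶠ[𝓝 y]
        fun z => (-1) ^ k * (k.factorial : ℝ) * (z ^ (k + 1))⁻¹ := by
      filter_upwards [hmem] with z hz
      exact ih hz
    rw [hev.deriv_eq]
    have h1 : HasDerivAt (fun z : ℝ => z ^ (k + 1)) (((k:ℝ) + 1) * y ^ k) y := by
      simpa using hasDerivAt_pow (k + 1) y
    have h2 := (h1.inv (pow_ne_zero (k + 1) hy)).const_mul ((-1 : ℝ) ^ k * (k.factorial : ℝ))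
    rw [(show HasDerivAt (fun z : ℝ => (-1 : ℝ) ^ k * (k.factorial : ℝ) * (z ^ (k + 1))⁻¹) _ y from h2).deriv]
    have hyk : y ^ (k+1) ≠ 0 := pow_ne_zero _ hy
    have hyk2 : y ^ (k+2) ≠ 0 := pow_ne_zero _ hy
    push_cast [Nat.factorial_succ]
    field_simp
    ring

lemma norm_iteratedFDeriv_inv_le (i : ℕ) {y : ℝ} (hy : y ≠ 0) :
    ‖iteratedFDeriv ℝ i (Inv.inv : ℝ → ℝ) y‖ ≤ (i.factorial : ℝ) * (|y|⁻¹) ^ (i + 1) := by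
  rw [norm_iteratedFDeriv_eq_norm_iteratedDeriv, iteratedDeriv_inv_eq i hy]
  rw [norm_mul, norm_mul]
  simp [abs_pow, abs_inv]

lemma Good.inv_Dfun : Good (fun x : Conf d n => (Dfun x)⁻¹) := by
  have hcd : ContDiffOn ℝ (⊤ : ℕ∞) (fun x : Conf d n => (Dfun x)⁻¹) (smallDiag d n)ᶜ :=
    (contDiff_Dfun.contDiffOn).inv (fun x hx => (Dfun_pos hx).ne')
  refine ⟨hcd, fun k K hK => ?_⟩
  have h : ∀ j : ℕ, ∃ C, ∀ x ∈ K, ‖iteratedFDeriv ℝ j (Dfun (d := d) (n := n)) x‖ ≤ C := fun j =>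
    hK.exists_bound_of_continuousOn
      ((contDiff_Dfun.continuous_iteratedFDeriv (natle j)).continuousOn)
  choose C hC using h
  set CD := 1 + ∑ i ∈ Finset.range (k + 1), max (C i) 0 with hCDdef
  have hCD1 : (1:ℝ) ≤ CD := by
    have : (0:ℝ) ≤ ∑ i ∈ Finset.range (k + 1), max (C i) 0 :=
      Finset.sum_nonneg fun i _ => le_max_right _ _
    simp only [hCDdef]; linarith
  have hCD0 : (0:ℝ) < CD := lt_of_lt_of_le one_pos hCD1
  refine ⟨(k.factorial : ℝ) * (k.factorial : ℝ) * CD ^ k, by positivity, k + 1, ?_⟩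
  intro x hx j hj
  have hDx : 0 < Dfun x := Dfun_pos hx.2
  set w : ℝ := 1 + (Dfun x)⁻¹ with hwdef
  have hw1 : (1:ℝ) ≤ w := one_le_w x
  have key := norm_iteratedFDerivWithin_comp_le (𝕜 := ℝ) (g := (Inv.inv : ℝ → ℝ))
    (f := Dfun) (n := j) (s := (smallDiag d n)ᶜ) (t := ({0}ᶜ : Set ℝ))
    (contDiffOn_inv (𝕜 := ℝ)) contDiff_Dfun.contDiffOn (natle j)
    isOpen_compl_singleton.uniqueDiffOn uniqueDiffOn_compl
    (fun z hz => by simpa using (Dfun_pos hz).ne') hx.2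
    (C := (k.factorial : ℝ) * w ^ (k + 1)) (D := CD) ?_ ?_
  · have heq : (fun x : Conf d n => (Dfun x)⁻¹) = (Inv.inv ∘ Dfun) := rfl
    rw [heq]
    refine key.trans ?_
    have hj' : (j.factorial : ℝ) ≤ (k.factorial : ℝ) := by exact_mod_cast Nat.factorial_le hj
    have hCDk : CD ^ j ≤ CD ^ k := pow_le_pow_right₀ hCD1 hj
    have hwpos : (0:ℝ) < w ^ (k+1) := by positivity
    calc (j.factorial : ℝ) * ((k.factorial : ℝ) * w ^ (k + 1)) * CD ^ j
        ≤ (k.factorial : ℝ) * ((k.factorial : ℝ) * w ^ (k + 1)) * CD ^ k := by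
          apply mul_le_mul (mul_le_mul_of_nonneg_right hj' (by positivity)) hCDk
            (by positivity) (by positivity)
      _ = (k.factorial : ℝ) * (k.factorial : ℝ) * CD ^ k * w ^ (k + 1) := by ring
  · -- bounds for derivatives of inv at Dfun x
    intro i hi
    rw [iteratedFDerivWithin_of_isOpen i isOpen_compl_singleton (by simpa using hDx.ne')]
    refine (norm_iteratedFDeriv_inv_le i hDx.ne').trans ?_
    have h1 : (i.factorial : ℝ) ≤ (k.factorial : ℝ) := by exact_mod_cast Nat.factorial_le (hi.trans hj)
    have h2 : |Dfun x|⁻¹ ≤ w := by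
      rw [abs_of_pos hDx]
      simp only [hwdef]
      have : (0:ℝ) ≤ (Dfun x)⁻¹ := le_of_lt (inv_pos.2 hDx)
      linarith
    have h3 : (|Dfun x|⁻¹) ^ (i+1) ≤ w ^ (k+1) := by
      calc (|Dfun x|⁻¹) ^ (i+1) ≤ w ^ (i+1) :=
            pow_le_pow_left₀ (by positivity) h2 _
        _ ≤ w ^ (k+1) := pow_le_pow_right₀ hw1 (by omega)
    have h4 : (0:ℝ) ≤ (|Dfun x|⁻¹) ^ (i+1) := by positivity
    exact mul_le_mul h1 h3 h4 (by positivity)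
  · -- bounds for derivatives of Dfun
    intro i hi1 hij
    rw [iteratedFDerivWithin_of_isOpen i isOpen_compl_smallDiag hx.2]
    refine (hC i x hx.1).trans ?_
    have hik : i ≤ k := le_trans hij hj
    calc C i ≤ CD := le_max_sum hik
      _ ≤ CD ^ i := le_self_pow₀ hCD1 (by omega)

lemma iteratedFDeriv_congr_nhds {f g : ℝ → ℝ} {y : ℝ} (h : f =ᶠ[𝓝 y] g) (i : ℕ) :
    iteratedFDeriv ℝ i f y = iteratedFDeriv ℝ i g y := by
  rw [← iteratedFDerivWithin_univ, ← iteratedFDerivWithin_univ]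
  exact Filter.EventuallyEq.iteratedFDerivWithin_eq (by rwa [nhdsWithin_univ]) h.eq_of_nhds i

lemma ST_bound (i : ℕ) :
    ∃ B : ℝ, ∀ y : ℝ, ‖iteratedFDeriv ℝ i Real.smoothTransition y‖ ≤ B := by
  obtain ⟨B, hB⟩ := (isCompact_Icc (a := (0:ℝ)) (b := 1)).exists_bound_of_continuousOn
    ((Real.smoothTransition.contDiff (n := ⊤).continuous_iteratedFDeriv (natle i)).continuousOn)
  refine ⟨max B 1, fun y => ?_⟩
  by_cases hy : y ∈ Icc (0:ℝ) 1
  · exact (hB y hy).trans (le_max_left _ _)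
  · rw [Set.mem_Icc, not_and_or, not_le, not_le] at hy
    rcases Nat.eq_zero_or_pos i with hi | hi
    · subst hi
      rw [norm_iteratedFDeriv_zero]
      calc ‖Real.smoothTransition y‖ = |Real.smoothTransition y| := rfl
        _ ≤ 1 := by
            rw [abs_of_nonneg (Real.smoothTransition.nonneg y)]
            exact Real.smoothTransition.le_one y
        _ ≤ max B 1 := le_max_right _ _
    · have hzero : iteratedFDeriv ℝ i Real.smoothTransition y = 0 := by
        rcases hy with hy | hy
        · have hev : Real.smoothTransition =ᶠ[𝓝 y] (fun _ => (0:ℝ)) := by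
            filter_upwards [Iio_mem_nhds hy] with z hz
            exact Real.smoothTransition.zero_of_nonpos (le_of_lt hz)
          rw [iteratedFDeriv_congr_nhds hev i, iteratedFDeriv_const_of_ne (by omega)]
          rfl
        · have hev : Real.smoothTransition =ᶠ[𝓝 y] (fun _ => (1:ℝ)) := by
            filter_upwards [Ioi_mem_nhds hy] with z hz
            exact Real.smoothTransition.one_of_one_le (le_of_lt hz)
          rw [iteratedFDeriv_congr_nhds hev i, iteratedFDeriv_const_of_ne (by omega)]
          rfl
      rw [hzero]
      simp only [norm_zero]
      exact le_trans zero_le_one (le_max_right _ _)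

lemma Good.compST {f : Conf d n → ℝ} (hf : Good f) :
    Good (fun x => Real.smoothTransition (f x)) := by
  refine ⟨Real.smoothTransition.contDiff.comp_contDiffOn hf.1, fun k K hK => ?_⟩
  obtain ⟨Cf, hCf, sf, hbf⟩ := hf.2 k K hK
  choose B hBb using ST_bound
  set Bk := 1 + ∑ i ∈ Finset.range (k + 1), max (B i) 0 with hBkdef
  have hBk0 : 0 < Bk := max_sum_pos B k
  refine ⟨(k.factorial : ℝ) * Bk * (1 + Cf) ^ k, by positivity, sf * k, ?_⟩
  intro x hx j hj
  set w : ℝ := 1 + (Dfun x)⁻¹ with hwdef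
  have hw1 : (1:ℝ) ≤ w := one_le_w x
  have hwsf : (1:ℝ) ≤ w ^ sf := one_le_pow₀ hw1
  set Dx : ℝ := max 1 (Cf * w ^ sf) with hDxdef
  have hDx1 : (1:ℝ) ≤ Dx := le_max_left _ _
  have key := norm_iteratedFDerivWithin_comp_le (𝕜 := ℝ) (g := Real.smoothTransition)
    (f := f) (n := j) (s := (smallDiag d n)ᶜ) (t := (univ : Set ℝ))
    (Real.smoothTransition.contDiff.contDiffOn) hf.1 (natle j)
    uniqueDiffOn_univ uniqueDiffOn_compl (mapsTo_univ _ _) hx.2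
    (C := Bk) (D := Dx) ?_ ?_
  · have heq : (fun x : Conf d n => Real.smoothTransition (f x)) =
        (Real.smoothTransition ∘ f) := rfl
    rw [heq]
    refine key.trans ?_
    have hj' : (j.factorial : ℝ) ≤ (k.factorial : ℝ) := by exact_mod_cast Nat.factorial_le hj
    have hDle : Dx ≤ (1 + Cf) * w ^ sf := by
      rw [hDxdef]
      apply max_le
      · nlinarith
      · nlinarith
    have hbase : (1:ℝ) ≤ (1 + Cf) * w ^ sf := by nlinarith
    have h2 : Dx ^ j ≤ ((1 + Cf) * w ^ sf) ^ k :=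
      le_trans (pow_le_pow_left₀ (by linarith) hDle j) (pow_le_pow_right₀ hbase hj)
    calc (j.factorial : ℝ) * Bk * Dx ^ j ≤ (k.factorial : ℝ) * Bk * ((1 + Cf) * w ^ sf) ^ k := by
          apply mul_le_mul (mul_le_mul_of_nonneg_right hj' (le_of_lt hBk0)) h2
            (by positivity) (by positivity)
      _ = (k.factorial : ℝ) * Bk * (1 + Cf) ^ k * w ^ (sf * k) := by
          rw [mul_pow, pow_mul]; ring
  · intro i hi
    rw [iteratedFDerivWithin_univ]
    exact (hBb i (f x)).trans (le_max_sum (hi.trans hj))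
  · intro i hi1 hij
    refine (hbf x hx i (hij.trans hj)).trans ?_
    calc Cf * w ^ sf ≤ Dx := le_max_right _ _
      _ ≤ Dx ^ i := le_self_pow₀ hDx1 (by omega)

/-- product of squared distances across the partition -/
def qfun (p : Finset (Fin n) × Finset (Fin n)) (x : Conf d n) : ℝ :=
  ∏ i ∈ p.1, ∏ j ∈ p.2, ‖x i - x j‖ ^ 2

def mdeg (p : Finset (Fin n) × Finset (Fin n)) : ℕ := p.1.card * p.2.card

/-- scale-invariant version of `qfun` -/
def rfun (p : Finset (Fin n) × Finset (Fin n)) (x : Conf d n) : ℝ :=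
  qfun p x * ((Dfun x)⁻¹) ^ mdeg p

lemma contDiff_finset_prod {α : Type*} (s : Finset α) (f : α → Conf d n → ℝ)
    (hf : ∀ a ∈ s, ContDiff ℝ (⊤ : ℕ∞) (f a)) :
    ContDiff ℝ (⊤ : ℕ∞) (fun x => ∏ a ∈ s, f a x) := by
  induction s using Finset.cons_induction with
  | empty => simpa using contDiff_const
  | cons a s ha ih =>
    simp only [Finset.prod_cons]
    exact (hf a (Finset.mem_cons_self a s)).mul
      (ih fun b hb => hf b (Finset.mem_cons_of_mem hb))

lemma contDiff_qfun (p : Finset (Fin n) × Finset (Fin n)) :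
    ContDiff ℝ (⊤ : ℕ∞) (qfun (d := d) p) := by
  unfold qfun
  apply contDiff_finset_prod
  intro i _
  apply contDiff_finset_prod
  intro j _
  exact ContDiff.norm_sq ℝ
    (((ContinuousLinearMap.proj (R := ℝ) (φ := fun _ : Fin n => Euc d) i).contDiff).sub
      ((ContinuousLinearMap.proj (R := ℝ) (φ := fun _ : Fin n => Euc d) j).contDiff))

lemma qfun_nonneg (p : Finset (Fin n) × Finset (Fin n)) (x : Conf d n) : 0 ≤ qfun p x :=
  Finset.prod_nonneg fun i _ => Finset.prod_nonneg fun j _ => by positivity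

lemma good_rfun (p : Finset (Fin n) × Finset (Fin n)) : Good (rfun (d := d) p) :=
  ((Good.of_contDiff (contDiff_qfun p)).mul (Good.inv_Dfun.pow (mdeg p))).congr fun x => rfl

def delta0 (n : ℕ) : ℝ := (((n : ℝ) * ((n : ℝ) + 1))⁻¹) ^ (2 * n ^ 2)

lemma delta0_pos (hn : 0 < n) : 0 < delta0 n := by
  have h : (0:ℝ) < (n : ℝ) * ((n : ℝ) + 1) := by
    have : (0:ℝ) < (n:ℝ) := by exact_mod_cast hn
    nlinarith
  unfold delta0
  positivity

/-- The combinatorial key lemma: off the diagonal, some nontrivial partition has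
`rfun` bounded below by the dimensional constant. -/
lemma exists_big_part (hn : 2 ≤ n) {x : Conf d n} (hx : x ∉ smallDiag d n) :
    ∃ p : Finset (Fin n) × Finset (Fin n), IsNontrivPart p ∧ delta0 n ≤ rfun p x := by
  classical
  have hn0 : 0 < n := by omega
  have hnR : (0:ℝ) < (n:ℝ) := by exact_mod_cast hn0
  obtain ⟨i1, j1, hne⟩ := not_mem_smallDiag_iff.1 hx
  -- the pair realizing the max distance
  obtain ⟨⟨i0, j0⟩, -, hmax⟩ := Finset.exists_max_image (Finset.univ : Finset (Fin n × Fin n))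
    (fun ij => ‖x ij.1 - x ij.2‖) ⟨(i1, j1), Finset.mem_univ _⟩
  set t : ℝ := ‖x i0 - x j0‖ with htdef
  have ht : 0 < t := by
    have h1 : ‖x i1 - x j1‖ ≤ t := hmax (i1, j1) (Finset.mem_univ _)
    have h2 : 0 < ‖x i1 - x j1‖ := norm_pos_iff.2 (sub_ne_zero.2 hne)
    linarith
  set a : Fin n → ℝ := fun i => ‖x i - x i0‖ with hadef
  have ha_nonneg : ∀ i, 0 ≤ a i := fun i => norm_nonneg _
  have ha_le : ∀ i, a i ≤ t := fun i => hmax (i, i0) (Finset.mem_univ _)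
  set b : Fin n → ℕ := fun i => min ⌊a i * (n + 1) / t⌋₊ n with hbdef
  have hbn : ∀ i, b i ≤ n := fun i => min_le_right _ _
  -- pigeonhole: some box `k ≤ n` is unoccupied
  have hk : ∃ k : ℕ, k ≤ n ∧ k ∉ Finset.image b Finset.univ := by
    by_contra h
    push_neg at h
    have hsub : Finset.range (n + 1) ⊆ Finset.image b Finset.univ := by
      intro k hkmem
      exact h k (Nat.lt_succ_iff.1 (Finset.mem_range.1 hkmem))
    have h1 : n + 1 ≤ (Finset.image b Finset.univ).card := by
      calc n + 1 = (Finset.range (n + 1)).card := (Finset.card_range _).symm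
        _ ≤ _ := Finset.card_le_card hsub
    have h2 : (Finset.image b Finset.univ).card ≤ n := by
      calc (Finset.image b Finset.univ).card ≤ (Finset.univ : Finset (Fin n)).card :=
            Finset.card_image_le
        _ = n := Finset.card_univ.trans (Fintype.card_fin n)
    omega
  obtain ⟨k, hkn, hknot⟩ := hk
  have hbi0 : b i0 = 0 := by
    have : a i0 = 0 := by simp [hadef]
    simp [hbdef, this]
  have hk0 : k ≠ 0 := by
    intro h
    apply hknot
    rw [h, ← hbi0]
    exact Finset.mem_image_of_mem b (Finset.mem_univ i0)
  have hk1 : 1 ≤ k := Nat.one_le_iff_ne_zero.2 hk0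
  set c : ℝ := k * t / (n + 1) with hcdef
  have hc_pos : 0 < c := by
    have : (1:ℝ) ≤ (k:ℝ) := by exact_mod_cast hk1
    rw [hcdef]; positivity
  set p : Finset (Fin n) × Finset (Fin n) :=
    (Finset.univ.filter (fun i => a i < c), Finset.univ.filter (fun i => ¬ a i < c)) with hpdef
  have hi0p : i0 ∈ p.1 := by
    simp only [hpdef, Finset.mem_filter, Finset.mem_univ, true_and]
    simpa [hadef] using hc_pos
  have hj0p : j0 ∈ p.2 := by
    simp only [hpdef, Finset.mem_filter, Finset.mem_univ, true_and]
    have hkc : c < t := by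
      rw [hcdef]
      rw [div_lt_iff₀ (by positivity)]
      have hkR : (k:ℝ) ≤ (n:ℝ) := by exact_mod_cast hkn
      nlinarith
    have : a j0 = t := by simp [hadef, htdef, norm_sub_rev]
    rw [this]
    linarith
  have hnontriv : IsNontrivPart p := by
    refine ⟨⟨i0, hi0p⟩, ⟨j0, hj0p⟩, ?_, ?_⟩
    · exact Finset.disjoint_filter_filter_not _ _ _
    · exact Finset.filter_union_filter_not_eq _ _
  -- the cross-distance bound
  have hcross : ∀ i ∈ p.1, ∀ j ∈ p.2, t / (n + 1) ≤ ‖x i - x j‖ := by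
    intro i hi j hj
    simp only [hpdef, Finset.mem_filter, Finset.mem_univ, true_and] at hi hj
    push_neg at hj
    -- show a j ≥ (k+1) t/(n+1)
    have hbj : b j ≠ k := by
      intro h
      apply hknot
      rw [← h]
      exact Finset.mem_image_of_mem b (Finset.mem_univ j)
    have hfloor : k ≤ ⌊a j * (n + 1) / t⌋₊ := by
      apply Nat.le_floor
      rw [le_div_iff₀ ht]
      rw [hcdef] at hj
      rw [div_le_iff₀ (by positivity)] at hj
      linarith
    have haj : ((k:ℝ) + 1) * t / (n + 1) ≤ a j := by
      rcases le_or_gt ⌊a j * (n + 1) / t⌋₊ n with hcase | hcase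
      · have hbjeq : b j = ⌊a j * (n + 1) / t⌋₊ := min_eq_left hcase
        have h2 : k + 1 ≤ ⌊a j * (n + 1) / t⌋₊ := by omega
        have h3 : ((k:ℝ) + 1) ≤ a j * (n + 1) / t := by
          have := Nat.floor_le (show (0:ℝ) ≤ a j * (n + 1) / t by positivity)
          have h4 : ((k + 1 : ℕ) : ℝ) ≤ (⌊a j * (n + 1) / t⌋₊ : ℝ) := by exact_mod_cast h2
          push_cast at h4
          linarith
        rw [div_le_iff₀ (by positivity)]
        rw [le_div_iff₀ ht] at h3
        linarith
      · -- floor > n forces a j ≥ t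
        have h3 : ((n:ℝ) + 1) ≤ a j * (n + 1) / t := by
          have h4 : (n + 1 : ℕ) ≤ ⌊a j * (n + 1) / t⌋₊ := hcase
          have := Nat.floor_le (show (0:ℝ) ≤ a j * (n + 1) / t by positivity)
          have h5 : ((n + 1 : ℕ) : ℝ) ≤ (⌊a j * (n + 1) / t⌋₊ : ℝ) := by exact_mod_cast h4
          push_cast at h5
          linarith
        have h6 : t ≤ a j := by
          rw [le_div_iff₀ ht] at h3
          have h7 : (0:ℝ) < (n:ℝ) + 1 := by positivity
          nlinarith
        have hk1R : (k:ℝ) + 1 ≤ (n:ℝ) + 1 := by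
          have : (k:ℝ) ≤ (n:ℝ) := by exact_mod_cast hkn
          linarith
        rw [div_le_iff₀ (by positivity)]
        nlinarith
    -- triangle inequality
    have htri : a j ≤ ‖x i - x j‖ + a i := by
      calc a j = ‖x j - x i0‖ := rfl
        _ ≤ ‖x j - x i‖ + ‖x i - x i0‖ := by
            have := norm_sub_le_norm_sub_add_norm_sub (x j) (x i) (x i0)
            linarith [norm_sub_le (x j - x i) (x i - x i0)]
        _ = ‖x i - x j‖ + a i := by rw [norm_sub_rev]
    have hai : a i < c := hi
    rw [hcdef] at hai
    have : ((k:ℝ) + 1) * t / (n + 1) - (k:ℝ) * t / (n + 1) = t / (n + 1) := by ring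
    linarith
  -- now the lower bound on rfun
  refine ⟨p, hnontriv, ?_⟩
  set m : ℕ := mdeg p with hmdef
  have hm1 : 1 ≤ m := by
    rw [hmdef]
    unfold mdeg
    have h1 : 0 < p.1.card := Finset.card_pos.2 hnontriv.1
    have h2 : 0 < p.2.card := Finset.card_pos.2 hnontriv.2.1
    exact Nat.one_le_iff_ne_zero.2 (Nat.mul_ne_zero h1.ne' h2.ne')
  have hm2 : m ≤ n ^ 2 := by
    rw [hmdef]
    unfold mdeg
    have h1 : p.1.card ≤ n := by
      calc p.1.card ≤ (Finset.univ : Finset (Fin n)).card := Finset.card_le_card (Finset.subset_univ _)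
        _ = n := Finset.card_univ.trans (Fintype.card_fin n)
    have h2 : p.2.card ≤ n := by
      calc p.2.card ≤ (Finset.univ : Finset (Fin n)).card := Finset.card_le_card (Finset.subset_univ _)
        _ = n := Finset.card_univ.trans (Fintype.card_fin n)
    calc p.1.card * p.2.card ≤ n * n := Nat.mul_le_mul h1 h2
      _ = n ^ 2 := (sq n).symm
  set A : ℝ := (t / (n + 1)) ^ 2 with hAdef
  set B : ℝ := ((n:ℝ) ^ 2 * t ^ 2)⁻¹ with hBdef
  have hA0 : 0 < A := by rw [hAdef]; positivity
  have hB0 : 0 < B := by rw [hBdef]; positivity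
  have hq : A ^ m ≤ qfun p x := by
    have h1 : ∀ i ∈ p.1, ∀ j ∈ p.2, A ≤ ‖x i - x j‖ ^ 2 := by
      intro i hi j hj
      rw [hAdef]
      exact pow_le_pow_left₀ (by positivity) (hcross i hi j hj) 2
    have hcard : p.2.card * p.1.card = m := by
      rw [hmdef]; unfold mdeg; ring
    calc A ^ m = (A ^ p.2.card) ^ p.1.card := by rw [← pow_mul A p.2.card p.1.card, hcard]
      _ = ∏ _i ∈ p.1, ∏ _j ∈ p.2, A := by rw [Finset.prod_const, Finset.prod_const]
      _ ≤ qfun p x := by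
          apply Finset.prod_le_prod (fun i _ => Finset.prod_nonneg fun j _ => le_of_lt hA0)
          intro i hi
          apply Finset.prod_le_prod (fun j _ => le_of_lt hA0)
          intro j hj
          exact h1 i hi j hj
  have hD : Dfun x ≤ (n:ℝ) ^ 2 * t ^ 2 := by
    unfold Dfun
    calc ∑ i : Fin n, ∑ j : Fin n, ‖x i - x j‖ ^ 2
        ≤ ∑ _i : Fin n, ∑ _j : Fin n, t ^ 2 := by
          apply Finset.sum_le_sum
          intro i _
          apply Finset.sum_le_sum
          intro j _
          exact pow_le_pow_left₀ (norm_nonneg _) (hmax (i, j) (Finset.mem_univ _)) 2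
      _ = (n:ℝ) ^ 2 * t ^ 2 := by
          simp [Finset.sum_const, Finset.card_univ]
          ring
  have hDinv : B ≤ (Dfun x)⁻¹ := by
    rw [hBdef]
    exact inv_anti₀ (Dfun_pos hx) hD
  have hBpow : B ^ m ≤ ((Dfun x)⁻¹) ^ m := pow_le_pow_left₀ (le_of_lt hB0) hDinv m
  have hmain : A ^ m * B ^ m ≤ rfun p x := by
    unfold rfun
    rw [← hmdef]
    apply mul_le_mul hq hBpow (by positivity) (qfun_nonneg p x)
  have hAB : A * B = (((n : ℝ) * ((n : ℝ) + 1))⁻¹) ^ 2 := by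
    rw [hAdef, hBdef]
    field_simp
  have hfinal : delta0 n ≤ A ^ m * B ^ m := by
    rw [← mul_pow, hAB, ← pow_mul]
    unfold delta0
    have he0 : (0:ℝ) ≤ ((n : ℝ) * ((n : ℝ) + 1))⁻¹ := by positivity
    have he1 : ((n : ℝ) * ((n : ℝ) + 1))⁻¹ ≤ 1 := by
      rw [inv_le_one_iff₀]
      right
      have h1R : (1:ℝ) ≤ (n:ℝ) := by exact_mod_cast hn0
      nlinarith
    apply pow_le_pow_of_le_one he0 he1
    omega
  linarith

/-- Telescoping sum for partitions of unity. -/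
lemma telescope {α : Type*} [DecidableEq α] (key : α → ℕ) (hkey : Function.Injective key)
    (s : Finset α) (f : α → ℝ) :
    ∑ p ∈ s, f p * ∏ q ∈ s.filter (fun q => key q < key p), (1 - f q)
      = 1 - ∏ q ∈ s, (1 - f q) := by
  induction s using Finset.induction_on_max_value key with
  | empty => simp
  | insert a s ha hmax ih =>
    rw [Finset.sum_insert ha]
    have hfilter_a : (insert a s).filter (fun q => key q < key a) = s := by
      ext q
      simp only [Finset.mem_filter, Finset.mem_insert]
      constructor
      · rintro ⟨rfl | hq, hlt⟩
        · exact absurd hlt (lt_irrefl _)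
        · exact hq
      · intro hq
        refine ⟨Or.inr hq, ?_⟩
        have hle : key q ≤ key a := hmax q hq
        have hne : key q ≠ key a := fun h => ha (hkey h ▸ hq)
        exact lt_of_le_of_ne hle hne
    have hfilter_p : ∀ p ∈ s, (insert a s).filter (fun q => key q < key p)
        = s.filter (fun q => key q < key p) := by
      intro p hp
      ext q
      simp only [Finset.mem_filter, Finset.mem_insert]
      constructor
      · rintro ⟨rfl | hq, hlt⟩
        · exfalso
          have hle : key p ≤ key q := hmax p hp
          omega
        · exact ⟨hq, hlt⟩
      · rintro ⟨hq, hlt⟩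
        exact ⟨Or.inr hq, hlt⟩
    rw [hfilter_a]
    have hsum : ∑ p ∈ s, f p * ∏ q ∈ (insert a s).filter (fun q => key q < key p), (1 - f q)
        = ∑ p ∈ s, f p * ∏ q ∈ s.filter (fun q => key q < key p), (1 - f q) :=
      Finset.sum_congr rfl fun p hp => by rw [hfilter_p p hp]
    rw [hsum, ih, Finset.prod_insert ha]
    ring

variable (n) in
/-- an injective enumeration of pairs of finsets -/
def pkey (p : Finset (Fin n) × Finset (Fin n)) : ℕ :=
  ((Fintype.equivFin (Finset (Fin n) × Finset (Fin n))) p : ℕ)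

lemma pkey_inj : Function.Injective (pkey n) := fun p q h =>
  (Fintype.equivFin _).injective (Fin.val_injective h)

variable (d n) in
open Classical in
/-- the pre-partition-of-unity cutoffs -/
def psi (p : Finset (Fin n) × Finset (Fin n)) (x : Conf d n) : ℝ :=
  if IsNontrivPart p then Real.smoothTransition (2 / delta0 n * rfun p x - 1) else 0

variable (d n) in
/-- the partition of unity -/
def chi (p : Finset (Fin n) × Finset (Fin n)) (x : Conf d n) : ℝ :=
  psi d n p x * ∏ q ∈ Finset.univ.filter (fun q => pkey n q < pkey n p), (1 - psi d n q x)

lemma psi_nonneg (p) (x : Conf d n) : 0 ≤ psi d n p x := by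
  unfold psi
  split
  · exact Real.smoothTransition.nonneg _
  · exact le_refl 0

lemma psi_le_one (p) (x : Conf d n) : psi d n p x ≤ 1 := by
  unfold psi
  split
  · exact Real.smoothTransition.le_one _
  · exact zero_le_one

lemma psi_of_nontriv {p} (hp : IsNontrivPart p) (x : Conf d n) :
    psi d n p x = Real.smoothTransition (2 / delta0 n * rfun p x - 1) := by
  unfold psi
  split
  · rfl
  · exact absurd hp ‹_›

lemma psi_of_not_nontriv {p} (hp : ¬ IsNontrivPart p) (x : Conf d n) : psi d n p x = 0 := by
  unfold psi
  split
  · exact absurd ‹_› hp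
  · rfl

lemma psi_eq_one {p} (hp : IsNontrivPart p) {x : Conf d n} (hn : 0 < n)
    (h : delta0 n ≤ rfun p x) : psi d n p x = 1 := by
  rw [psi_of_nontriv hp]
  apply Real.smoothTransition.one_of_one_le
  have hd : 0 < delta0 n := delta0_pos hn
  rw [le_sub_iff_add_le]
  calc (1:ℝ) + 1 = 2 := by norm_num
    _ ≤ 2 / delta0 n * rfun p x := by
        rw [div_mul_eq_mul_div, le_div_iff₀ hd]
        nlinarith

lemma psi_eq_zero_of_small {p} {x : Conf d n} (hn : 0 < n)
    (h : rfun p x ≤ delta0 n / 2) : psi d n p x = 0 := by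
  by_cases hp : IsNontrivPart p
  · rw [psi_of_nontriv hp]
    apply Real.smoothTransition.zero_of_nonpos
    have hd : 0 < delta0 n := delta0_pos hn
    have : 2 / delta0 n * rfun p x ≤ 1 := by
      rw [div_mul_eq_mul_div, div_le_one hd]
      nlinarith
    linarith
  · exact psi_of_not_nontriv hp x

lemma good_psi (p) : Good (psi d n p) := by
  by_cases hp : IsNontrivPart p
  · have h1 : Good (fun x : Conf d n => 2 / delta0 n * rfun p x + (-1)) :=
      ((Good.const (2 / delta0 n)).mul (good_rfun p)).add (Good.const (-1))
    have h2 : Good (fun x : Conf d n => Real.smoothTransition (2 / delta0 n * rfun p x + (-1))) :=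
      h1.compST
    exact h2.congr fun x => by rw [psi_of_nontriv hp, sub_eq_add_neg]
  · exact (Good.const 0).congr fun x => by rw [psi_of_not_nontriv hp]

lemma good_one_sub_psi (q) : Good (fun x : Conf d n => 1 - psi d n q x) := by
  have h : Good (fun x : Conf d n => (1:ℝ) + (-1) * psi d n q x) :=
    (Good.const 1).add ((Good.const (-1)).mul (good_psi q))
  exact h.congr fun x => by ring

lemma good_chi (p) : Good (chi d n p) := by
  have h := (good_psi p).mul (Good.prod
    (Finset.univ.filter (fun q => pkey n q < pkey n p))
    (fun q (x : Conf d n) => 1 - psi d n q x) (fun q _ => good_one_sub_psi q))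
  exact h.congr fun x => rfl

lemma pow_one_add_le {a : ℝ} (ha : 0 ≤ a) (s : ℕ) : (1 + a) ^ s ≤ 2 ^ s * (1 + a ^ s) := by
  have h1 : (1 + a) ≤ 2 * max 1 a := by
    rcases le_total a 1 with h | h
    · rw [max_eq_left h]; linarith
    · rw [max_eq_right h]; linarith
  have h2 : (1 + a) ^ s ≤ (2 * max 1 a) ^ s :=
    pow_le_pow_left₀ (by linarith) h1 s
  have h3 : (max 1 a) ^ s ≤ 1 + a ^ s := by
    rcases le_total a 1 with h | h
    · rw [max_eq_left h, one_pow]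
      have : (0:ℝ) ≤ a ^ s := by positivity
      linarith
    · rw [max_eq_right h]
      have : (0:ℝ) ≤ 1 := zero_le_one
      linarith
  calc (1 + a) ^ s ≤ (2 * max 1 a) ^ s := h2
    _ = 2 ^ s * (max 1 a) ^ s := by rw [mul_pow]
    _ ≤ 2 ^ s * (1 + a ^ s) := by
        apply mul_le_mul_of_nonneg_left h3 (by positivity)

lemma temperedAlong_of_good {f : Conf d n → ℝ} (hn : 0 < n) (hf : Good f) :
    TemperedAlong (smallDiag d n) (fun x => (f x : ℂ)) := by
  constructor
  · exact Complex.ofRealCLM.contDiff.comp_contDiffOn hf.1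
  · intro k K hK
    obtain ⟨C, hC, s, hb⟩ := hf.2 k K hK
    refine ⟨C * 2 ^ (s + 1), ((2 * (s + 1) : ℕ) : ℝ), mul_pos hC (by positivity),
      by exact_mod_cast (by omega : 0 < 2 * (s + 1)), ?_⟩
    intro x hx j hj
    have hxo : x ∈ (smallDiag d n)ᶜ := hx.2
    have h1 : ‖iteratedFDeriv ℝ j (fun x => (f x : ℂ)) x‖
        = ‖iteratedFDerivWithin ℝ j f (smallDiag d n)ᶜ x‖ := by
      rw [show (fun x : Conf d n => (f x : ℂ)) = (Complex.ofRealLI ∘ f) from rfl]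
      rw [← iteratedFDerivWithin_of_isOpen j isOpen_compl_smallDiag hxo]
      exact Complex.ofRealLI.norm_iteratedFDerivWithin_comp_left (hf.1 x hxo)
        uniqueDiffOn_compl hxo (natle j)
    rw [h1]
    set r := infDist x (smallDiag d n) with hrdef
    have hr : 0 < r := by
      rw [hrdef]
      exact (isClosed_smallDiag.notMem_iff_infDist_pos smallDiag_nonempty).1 hx.2
    have hr2 : (0:ℝ) < r ^ 2 := by positivity
    have hD2 : (Dfun x)⁻¹ ≤ (r ^ 2)⁻¹ :=
      inv_anti₀ hr2 (infDist_sq_le_Dfun hn x)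
    have hinv0 : (0:ℝ) ≤ (Dfun x)⁻¹ := inv_nonneg.2 (Dfun_nonneg x)
    have hw : (1 + (Dfun x)⁻¹) ^ s ≤ (1 + (r ^ 2)⁻¹) ^ (s + 1) := by
      calc (1 + (Dfun x)⁻¹) ^ s ≤ (1 + (r ^ 2)⁻¹) ^ s :=
            pow_le_pow_left₀ (by linarith) (by linarith) s
        _ ≤ (1 + (r ^ 2)⁻¹) ^ (s + 1) := by
            have hq0 : (0:ℝ) ≤ (r ^ 2)⁻¹ := by positivity
            apply pow_le_pow_right₀ (by linarith) (by omega)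
    have h2 : (1 + (r ^ 2)⁻¹) ^ (s + 1) ≤ 2 ^ (s + 1) * (1 + ((r ^ 2)⁻¹) ^ (s + 1)) :=
      pow_one_add_le (by positivity) (s + 1)
    have hrpow : ((r ^ 2)⁻¹) ^ (s + 1) = r ^ (-((2 * (s + 1) : ℕ) : ℝ)) := by
      rw [Real.rpow_neg hr.le, Real.rpow_natCast, ← inv_pow, ← pow_mul, inv_pow]
    have hmain := hb x hx j hj
    calc ‖iteratedFDerivWithin ℝ j f (smallDiag d n)ᶜ x‖
        ≤ C * (1 + (Dfun x)⁻¹) ^ s := hmain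
      _ ≤ C * (2 ^ (s + 1) * (1 + ((r ^ 2)⁻¹) ^ (s + 1))) := by
          apply mul_le_mul_of_nonneg_left (le_trans hw h2) hC.le
      _ = C * 2 ^ (s + 1) * (1 + r ^ (-((2 * (s + 1) : ℕ) : ℝ))) := by
          rw [hrpow]; ring


end St15

/-- Cover of `M^n \ d_n` and a subordinated tempered partition of
unity.  The sets `C_{I₁I₂}`, for `(I₁,I₂)` running over the nontrivial partitions of
`{1,…,n}`, cover `M^n \ d_n`, and there is a subordinated partition of unity
`{χ_{I₁I₂}}` all of whose members are tempered along the small diagonal `d_n`. -/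
theorem statement_15 {d n : ℕ} (hn : 2 ≤ n) :
    -- the `C_{I₁I₂}` cover `M^n \ d_n`
    (⋃ p ∈ {p : Finset (Fin n) × Finset (Fin n) | IsNontrivPart p}, Cpart (d := d) p) =
      (smallDiag d n)ᶜ ∧
    -- a subordinated partition of unity, tempered along `d_n`
    ∃ χ : Finset (Fin n) × Finset (Fin n) → Conf d n → ℝ,
      (∀ p, ¬ IsNontrivPart p → χ p = 0) ∧
      -- nonnegative
      (∀ p x, 0 ≤ χ p x) ∧
      -- smooth on `M^n \ d_n` and tempered along `d_n`
      (∀ p, IsNontrivPart p →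
        TemperedAlong (smallDiag d n) (fun x => (χ p x : ℂ))) ∧
      -- supported (relatively to `M^n \ d_n`) in `C_{I₁I₂}`
      (∀ p, IsNontrivPart p →
        closure (Function.support (χ p)) ∩ (smallDiag d n)ᶜ ⊆ Cpart p) ∧
      -- summing to one on `M^n \ d_n`
      (∀ x : Conf d n, x ∉ smallDiag d n →
        ∑ p : Finset (Fin n) × Finset (Fin n), χ p x = 1) := by
  classical
  have hn0 : 0 < n := by omega
  constructor
  · -- the covering property
    ext x
    simp only [Set.mem_iUnion, Set.mem_setOf_eq, Set.mem_compl_iff, exists_prop]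
    constructor
    · rintro ⟨p, hp, hxp⟩
      obtain ⟨i, hi⟩ := hp.1
      obtain ⟨j, hj⟩ := hp.2.1
      intro hdiag
      exact hxp i hi j hj (hdiag i j)
    · intro hx
      obtain ⟨i0, j0, hne⟩ := St15.not_mem_smallDiag_iff.1 hx
      refine ⟨(Finset.univ.filter (fun i => x i = x i0),
               Finset.univ.filter (fun i => ¬ x i = x i0)), ?_, ?_⟩
      · refine ⟨⟨i0, ?_⟩, ⟨j0, ?_⟩, Finset.disjoint_filter_filter_not _ _ _,
          Finset.filter_union_filter_not_eq _ _⟩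
        · simp
        · simp only [Finset.mem_filter, Finset.mem_univ, true_and]
          exact fun h => hne h.symm
      · intro i hi j hj
        simp only [Finset.mem_filter, Finset.mem_univ, true_and] at hi hj
        rw [hi]
        exact fun h => hj h.symm
  · refine ⟨St15.chi d n, ?_, ?_, ?_, ?_, ?_⟩
    · -- vanishing for trivial partitions
      intro p hp
      funext x
      unfold St15.chi
      rw [St15.psi_of_not_nontriv hp, zero_mul]
      rfl
    · -- nonnegativity
      intro p x
      unfold St15.chi
      apply mul_nonneg (St15.psi_nonneg p x)
      apply Finset.prod_nonneg
      intro q _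
      have := St15.psi_le_one q x
      linarith
    · -- temperedness
      intro p _
      exact St15.temperedAlong_of_good hn0 (St15.good_chi p)
    · -- support condition
      intro p _ y hy
      obtain ⟨hyc, hyd⟩ := hy
      have hr : St15.delta0 n / 2 ≤ St15.rfun p y := by
        by_contra hlt
        push_neg at hlt
        set U := (smallDiag d n)ᶜ ∩ (St15.rfun p) ⁻¹' (Set.Iio (St15.delta0 n / 2)) with hU
        have hUopen : IsOpen U :=
          ContinuousOn.isOpen_inter_preimage ((St15.good_rfun p).1.continuousOn)
            St15.isOpen_compl_smallDiag isOpen_Iio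
        have hyU : y ∈ U := ⟨hyd, hlt⟩
        obtain ⟨z, hzU, hzs⟩ := (_root_.mem_closure_iff.1 hyc U hUopen hyU)
        have hchi : St15.chi d n p z ≠ 0 := hzs
        have hpsi : St15.psi d n p z ≠ 0 := fun h => hchi (by unfold St15.chi; rw [h, zero_mul])
        exact hpsi (St15.psi_eq_zero_of_small hn0 (le_of_lt hzU.2))
      have hd0 : 0 < St15.delta0 n := St15.delta0_pos hn0
      have hrpos : 0 < St15.rfun p y := lt_of_lt_of_le (by linarith) hr
      have hq : St15.qfun p y ≠ 0 := by
        intro h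
        unfold St15.rfun at hrpos
        rw [h, zero_mul] at hrpos
        exact lt_irrefl 0 hrpos
      simp only [Cpart, Set.mem_setOf_eq]
      intro i hi j hj
      unfold St15.qfun at hq
      rw [Finset.prod_ne_zero_iff] at hq
      have h2 := hq i hi
      rw [Finset.prod_ne_zero_iff] at h2
      have h3 := h2 j hj
      intro heq
      apply h3
      rw [heq, sub_self]
      norm_num
    · -- partition of unity
      intro x hx
      have htel := St15.telescope (St15.pkey n) St15.pkey_inj Finset.univ
        (fun p => St15.psi d n p x)
      have hsum : ∑ p : Finset (Fin n) × Finset (Fin n), St15.chi d n p x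
          = 1 - ∏ q ∈ Finset.univ, (1 - St15.psi d n q x) := by
        rw [← htel]
        apply Finset.sum_congr rfl
        intro p _
        rfl
      rw [hsum]
      obtain ⟨p₀, hp₀, hbig⟩ := St15.exists_big_part hn hx
      have hone : St15.psi d n p₀ x = 1 := St15.psi_eq_one hp₀ hn0 hbig
      rw [Finset.prod_eq_zero (Finset.mem_univ p₀) (by rw [hone]; ring)]
      ring

end
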